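/- Suppose there exists a set P of n points in ℝ^d, all with positive coordinates, such that for every subset P' ⊆ P there exist k closed half-spaces each of the form {x : ∑ᵢ xᵢ/bᵢ ≤ d} (with all bᵢ > 0) whose union contains P' and is disjoint from P \ P'. Then there exists a set H of n hyperplanes in ℝ^d such that the family {{h ∈ H : h ∩ Δ ≠ ∅} : Δ an open k-dimensional simplex in ℝ^d} shatters H; in particular its VC-dimension is at least n. -/

import Mathlib

def Shatters {X : Type*} (R : Set (Set X)) (Y : Set X) : Prop :=
  ∀ Z ⊆ Y, ∃ S ∈ R, Y ∩ S = Z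

noncomputable def VCdim {X : Type*} (R : Set (Set X)) : ℕ∞ :=
  ⨆ (Y : Finset X) (_ : Shatters R ↑Y), (Y.card : ℕ∞)

/-- A hyperplane in ℝ^d. -/
def IsHyperplane (d : ℕ) (h : Set (Fin d → ℝ)) : Prop :=
  ∃ (a : Fin d → ℝ) (c : ℝ), a ≠ 0 ∧ h = {x | ∑ i, a i * x i = c}

/-- An open `k`-dimensional simplex in ℝ^d: the relative interior of the convex
hull of `k+1` affinely independent points. -/
def IsOpenSimplex (d k : ℕ) (Δ : Set (Fin d → ℝ)) : Prop :=
  ∃ v : Fin (k + 1) → (Fin d → ℝ), AffineIndependent ℝ v ∧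
    Δ = intrinsicInterior ℝ (convexHull ℝ (Set.range v))

/-- The set system induced on a set `H` of hyperplanes by open `k`-dimensional
simplices: each simplex selects the hyperplanes it meets. -/
def SimplexSystem (d k : ℕ) (H : Set (Set (Fin d → ℝ))) : Set (Set (Set (Fin d → ℝ))) :=
  {S | ∃ Δ : Set (Fin d → ℝ), IsOpenSimplex d k Δ ∧ S = {h ∈ H | (h ∩ Δ).Nonempty}}

section AuxProofs
open Set Finset

lemma exists_near_notMem {V : Type*} [NormedAddCommGroup V] [NormedSpace ℝ V]
    (s : AffineSubspace ℝ V) (hs : s ≠ ⊤) (x : V) {δ : ℝ} (hδ : 0 < δ) :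
    ∃ y, y ∉ s ∧ dist y x < δ := by
  by_cases hx : x ∈ s
  · obtain ⟨z, hz⟩ : ∃ z, z ∉ s := by
      by_contra h
      push_neg at h
      exact hs (AffineSubspace.ext fun y => ⟨fun _ => trivial, fun _ => h y⟩)
    have hzx : z - x ≠ 0 := by
      intro h
      exact hz (by rwa [sub_eq_zero.mp h])
    have hn : 0 < ‖z - x‖ := norm_pos_iff.mpr hzx
    set t : ℝ := δ / (2 * ‖z - x‖) with ht_def
    have ht : 0 < t := by positivity
    refine ⟨x + t • (z - x), ?_, ?_⟩
    · intro hmem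
      apply hz
      have h1 : (x + t • (z - x)) -ᵥ x ∈ s.direction :=
        AffineSubspace.vsub_mem_direction hmem hx
      have h1' : t • (z - x) ∈ s.direction := by
        simpa [vsub_eq_sub] using h1
      have h2 : z - x ∈ s.direction := by
        have := s.direction.smul_mem t⁻¹ h1'
        rwa [smul_smul, inv_mul_cancel₀ (ne_of_gt ht), one_smul] at this
      have h3 : (z - x) +ᵥ x ∈ s := AffineSubspace.vadd_mem_of_mem_direction h2 hx
      simpa [vadd_eq_add, sub_add_cancel] using h3
    · rw [dist_eq_norm]
      have : x + t • (z - x) - x = t • (z - x) := by abel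
      rw [this, norm_smul, Real.norm_of_nonneg ht.le, ht_def]
      rw [div_mul_eq_mul_div, mul_comm (2:ℝ), mul_comm δ]
      calc ‖z - x‖ * δ / (‖z - x‖ * 2) = δ/2 := by
            rw [mul_div_mul_left _ _ (ne_of_gt hn)]
        _ < δ := by linarith
  · exact ⟨x, hx, by simpa using hδ⟩

lemma exists_affineIndependent_near (d : ℕ) :
    ∀ (m : ℕ), m ≤ d → ∀ (z : Fin (m+1) → (Fin d → ℝ)) (δ : ℝ), 0 < δ →
    ∃ v : Fin (m+1) → (Fin d → ℝ), AffineIndependent ℝ v ∧ ∀ j, dist (v j) (z j) < δ := by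
  intro m
  induction m with
  | zero =>
    intro _ z δ hδ
    haveI : Subsingleton (Fin (0+1)) := ⟨fun a b => Fin.ext (by omega)⟩
    exact ⟨z, affineIndependent_of_subsingleton ℝ z, fun j => by simpa using hδ⟩
  | succ m ih =>
    intro hm z δ hδ
    obtain ⟨v', hv', hd'⟩ := ih (Nat.le_of_succ_le hm) (fun j => z j.castSucc) δ hδ
    have hspan : affineSpan ℝ (Set.range v') ≠ ⊤ := by
      intro htop
      have hvtop : vectorSpan ℝ (Set.range v') = ⊤ :=
        AffineSubspace.vectorSpan_eq_top_of_affineSpan_eq_top ℝ _ _ htop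
      have hle : Module.finrank ℝ (vectorSpan ℝ (Set.range v')) ≤ m :=
        finrank_vectorSpan_range_le ℝ v' (by simp)
      rw [hvtop] at hle
      have hd2 : Module.finrank ℝ (Fin d → ℝ) = d := by simp
      rw [finrank_top, hd2] at hle
      omega
    obtain ⟨y, hy, hyd⟩ := exists_near_notMem _ hspan (z (Fin.last (m+1))) hδ
    have hcs : ∀ x : Fin (m+2), x ≠ Fin.last (m+1) → ∃ i : Fin (m+1), x = i.castSucc :=
      fun x hx => ⟨Fin.castPred x hx, (Fin.castSucc_castPred x hx).symm⟩
    refine ⟨Fin.snoc v' y, ?_, ?_⟩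
    · have einj : Function.Injective (fun x : {y : Fin (m+2) // y ≠ Fin.last (m+1)} =>
          Fin.castPred (x : Fin (m+2)) x.2) := by
        intro a b hab
        apply Subtype.ext
        have h2 := congrArg Fin.castSucc hab
        simpa [Fin.castSucc_castPred] using h2
      have key : AffineIndependent ℝ
          (v' ∘ (⟨_, einj⟩ : {x : Fin (m+2) // x ≠ Fin.last (m+1)} ↪ Fin (m+1))) :=
        hv'.comp_embedding _
      have he : (fun x : {y : Fin (m+2) // y ≠ Fin.last (m+1)} =>
          (Fin.snoc v' y : Fin (m+2) → (Fin d → ℝ)) (x : Fin (m+2)))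
          = v' ∘ (⟨_, einj⟩ : {x : Fin (m+2) // x ≠ Fin.last (m+1)} ↪ Fin (m+1)) := by
        funext x
        obtain ⟨i, hi⟩ := hcs x x.2
        simp only [Function.comp_apply, Function.Embedding.coeFn_mk]
        have h3 : Fin.castPred (x : Fin (m+2)) x.2 = i :=
          Fin.castSucc_injective _ (by rw [Fin.castSucc_castPred, hi])
        rw [h3]
        conv_lhs => rw [hi, Fin.snoc_castSucc]
      apply AffineIndependent.affineIndependent_of_notMem_span (i := Fin.last (m+1))
      · exact he ▸ key
      · rw [Fin.snoc_last]
        intro hmem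
        apply hy
        have himg : (Fin.snoc v' y : Fin (m+2) → (Fin d → ℝ)) '' {x | x ≠ Fin.last (m+1)}
            ⊆ Set.range v' := by
          rintro _ ⟨x, hx, rfl⟩
          obtain ⟨i, rfl⟩ := hcs x hx
          exact ⟨i, by rw [Fin.snoc_castSucc]⟩
        exact affineSpan_mono ℝ himg hmem
    · intro j
      refine Fin.lastCases ?_ ?_ j
      · simpa using hyd
      · intro i
        simpa using hd' i

lemma mem_intrinsicInterior_convexHull {d N : ℕ} (v : Fin (N+1) → (Fin d → ℝ))
    (hv : AffineIndependent ℝ v) (t : Fin (N+1) → ℝ) (ht : ∀ j, 0 < t j)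
    (hsum : ∑ j, t j = 1) :
    (∑ j, t j • v j) ∈ intrinsicInterior ℝ (convexHull ℝ (Set.range v)) := by
  classical
  set u : Fin (N+1) → (Fin d → ℝ) := fun j => v j - v 0 with hu
  set W : Submodule ℝ (Fin d → ℝ) := Submodule.span ℝ (Set.range u) with hW
  set v' : Fin (N+1) → W := fun j => ⟨u j, Submodule.subset_span ⟨j, rfl⟩⟩ with hv'def
  set φ : W →ᵃⁱ[ℝ] (Fin d → ℝ) :=
    (AffineIsometryEquiv.constVAdd ℝ (Fin d → ℝ) (v 0)).toAffineIsometry.comp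
      W.subtypeₗᵢ.toAffineIsometry with hφ
  have hφv : ∀ j, φ (v' j) = v j := by
    intro j
    simp [hφ, hv'def, hu, vadd_eq_add]
  -- v' is affinely independent
  have hv'indep : AffineIndependent ℝ v' := by
    apply AffineIndependent.of_comp φ.toAffineMap
    have : (φ.toAffineMap ∘ v') = v := by
      funext j; rw [Function.comp_apply, ← hφv j]; rfl
    rwa [this]
  -- v' spans W
  have hrange : Set.range v' = ((↑) ⁻¹' (Set.range u) : Set W) := by
    ext w
    constructor
    · rintro ⟨j, rfl⟩; exact ⟨j, rfl⟩
    · rintro ⟨j, hj⟩; exact ⟨j, Subtype.ext hj⟩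
  have hspanW : Submodule.span ℝ (Set.range v') = ⊤ := by
    rw [hrange]; exact Submodule.span_span_coe_preimage
  have hv'0 : v' 0 = 0 := by
    apply Subtype.ext; simp [hv'def, hu]
  have htot : affineSpan ℝ (Set.range v') = ⊤ := by
    rw [AffineSubspace.affineSpan_eq_top_iff_vectorSpan_eq_top_of_nonempty ℝ _ _
      (Set.range_nonempty v')]
    rw [vectorSpan_def]
    rw [eq_top_iff, ← hspanW]
    apply Submodule.span_mono
    intro x hx
    refine ⟨x, hx, v' 0, ⟨0, rfl⟩, ?_⟩
    simp [hv'0]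
  set b : AffineBasis (Fin (N+1)) ℝ W := ⟨v', hv'indep, htot⟩ with hb
  have hbcoe : ⇑b = v' := rfl
  set y : W := Finset.univ.affineCombination ℝ v' t with hy
  have hysum : y = ∑ j, t j • v' j :=
    Finset.univ.affineCombination_eq_linear_combination v' t hsum
  have hymem : y ∈ interior (convexHull ℝ (Set.range v')) := by
    have h1 := b.interior_convexHull
    rw [hbcoe] at h1
    rw [h1]
    intro i
    have := b.coord_apply_combination_of_mem (Finset.mem_univ i) (w := t) hsum
    rw [hbcoe] at this
    rw [hy, this]
    exact ht i
  have hφy : φ y = ∑ j, t j • v j := by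
    have hcoe : (y : Fin d → ℝ) = ∑ j, t j • u j := by
      rw [hysum]
      rw [show ((∑ j, t j • v' j : W) : Fin d → ℝ) = W.subtype (∑ j, t j • v' j) from rfl]
      rw [map_sum]
      simp [hv'def]
    have : φ y = v 0 + (y : Fin d → ℝ) := by
      simp [hφ, vadd_eq_add]
    rw [this, hcoe]
    have : ∑ j, t j • u j = ∑ j, t j • v j - ∑ j, t j • v 0 := by
      rw [← Finset.sum_sub_distrib]
      congr 1; funext j; rw [hu, smul_sub]
    rw [this, ← Finset.sum_smul, hsum, one_smul]
    abel
  -- assemble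
  have himg : convexHull ℝ (Set.range v) = φ '' convexHull ℝ (Set.range v') := by
    have hvcomp : v = ⇑φ.toAffineMap ∘ v' := by
      funext j; rw [Function.comp_apply, ← hφv j]; rfl
    rw [hvcomp, Set.range_comp, ← AffineMap.image_convexHull]
    rfl
  rw [himg, φ.image_intrinsicInterior]
  exact ⟨y, interior_subset_intrinsicInterior hymem, hφy⟩

lemma exists_weights_aux {N : ℕ} (a : Fin (N+1) → ℝ) (j' : Fin (N+1)) (θ : ℝ)
    (h0 : 0 ≤ θ) (h1 : θ < 1) :
    ∃ t : Fin (N+1) → ℝ, (∀ j, 0 < t j) ∧ ∑ j, t j = 1 ∧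
      ∑ j, t j * a j = (1-θ) * ((∑ j, a j)/(N+1)) + θ * a j' := by
  classical
  refine ⟨fun j => (1-θ)/(N+1) + if j = j' then θ else 0, ?_, ?_, ?_⟩
  · intro j
    have hN : (0:ℝ) < (N:ℝ)+1 := by positivity
    have : 0 < (1-θ)/((N:ℝ)+1) := div_pos (by linarith) hN
    by_cases h : j = j' <;> simp [h] <;> push_cast <;> linarith [this]
  · rw [Finset.sum_add_distrib, Finset.sum_ite_eq' Finset.univ j']
    simp [Finset.card_univ]
    push_cast
    field_simp
    ring
  · have : ∀ j, ((1-θ)/(N+1) + if j = j' then θ else 0) * a j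
        = (1-θ)/((N:ℝ)+1) * a j + (if j = j' then θ * a j else 0) := by
      intro j; by_cases h : j = j' <;> simp [h] <;> ring
    simp_rw [this]
    rw [Finset.sum_add_distrib, Finset.sum_ite_eq' Finset.univ j', ← Finset.mul_sum]
    simp
    ring

lemma exists_weights {N : ℕ} (a : Fin (N+1) → ℝ) (c : ℝ) (j0 j1 : Fin (N+1))
    (h0 : a j0 < c) (h1 : c < a j1) :
    ∃ t : Fin (N+1) → ℝ, (∀ j, 0 < t j) ∧ ∑ j, t j = 1 ∧ ∑ j, t j * a j = c := by
  set μ : ℝ := (∑ j, a j)/(N+1) with hμ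
  by_cases hc : μ < c
  · have hden : 0 < a j1 - μ := by linarith
    set θ : ℝ := (c - μ)/(a j1 - μ) with hθ
    have hθ0 : 0 ≤ θ := div_nonneg (by linarith) hden.le
    have hθ1 : θ < 1 := by
      rw [hθ, div_lt_one hden]; linarith
    obtain ⟨t, h1', h2', h3'⟩ := exists_weights_aux a j1 θ hθ0 hθ1
    refine ⟨t, h1', h2', ?_⟩
    rw [h3', ← hμ, hθ]
    field_simp
    ring
  · push_neg at hc
    have hden : 0 < μ - a j0 := by linarith
    set θ : ℝ := (μ - c)/(μ - a j0) with hθ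
    have hθ0 : 0 ≤ θ := by
      apply div_nonneg _ hden.le; linarith
    have hθ1 : θ < 1 := by
      rw [hθ, div_lt_one hden]; linarith
    obtain ⟨t, h1', h2', h3'⟩ := exists_weights_aux a j0 θ hθ0 hθ1
    refine ⟨t, h1', h2', ?_⟩
    rw [h3', ← hμ, hθ]
    field_simp
    ring

lemma hyperplane_inj {d : ℕ} (hd : 0 < d) (p q : Fin d → ℝ) (hp : ∀ i, 0 < p i)
    (hq : ∀ i, 0 < q i)
    (h : {x : Fin d → ℝ | ∑ i, p i * x i = (d:ℝ)} = {x : Fin d → ℝ | ∑ i, q i * x i = (d:ℝ)}) :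
    p = q := by
  have hd0 : (0:ℝ) < d := by exact_mod_cast hd
  funext i
  have hx : (∑ i', p i' * (Pi.single i ((d:ℝ)/p i) : Fin d → ℝ) i') = (d:ℝ) := by
    rw [Finset.sum_eq_single i]
    · rw [Pi.single_eq_same]; field_simp
      rw [div_self (ne_of_gt (hp i))]
    · intro c _ hc; rw [Pi.single_eq_of_ne hc, mul_zero]
    · simp
  have hmem : (Pi.single i ((d:ℝ)/p i) : Fin d → ℝ) ∈ {x : Fin d → ℝ | ∑ i', p i' * x i' = (d:ℝ)} := hx
  rw [h] at hmem
  have hq2 : q i * ((d:ℝ)/p i) = d := by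
    have h2 : (∑ i', q i' * (Pi.single i ((d:ℝ)/p i) : Fin d → ℝ) i') = (d:ℝ) := hmem
    rwa [Finset.sum_eq_single i, Pi.single_eq_same] at h2
    · intro c _ hc; rw [Pi.single_eq_of_ne hc, mul_zero]
    · simp
  rw [mul_div_assoc', div_eq_iff (ne_of_gt (hp i))] at hq2
  have h3 : (d:ℝ) * q i = (d:ℝ) * p i := by linarith
  exact (mul_left_cancel₀ (ne_of_gt hd0) h3).symm

lemma sum_mul_sum_smul {d N : ℕ} (p : Fin d → ℝ) (v : Fin N → (Fin d → ℝ)) (t : Fin N → ℝ) :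
    ∑ i, p i * (∑ j, t j • v j) i = ∑ j, t j * ∑ i, p i * v j i := by
  have h1 : ∀ i, (∑ j, t j • v j) i = ∑ j, t j * v j i := by
    intro i; rw [Finset.sum_apply]; simp [smul_eq_mul]
  simp_rw [h1, Finset.mul_sum]
  rw [Finset.sum_comm]
  refine Finset.sum_congr rfl fun j _ => ?_
  exact Finset.sum_congr rfl fun i _ => by ring

lemma F_perturb {d : ℕ} (p x y : Fin d → ℝ) (hp : ∀ i, 0 ≤ p i) :
    |∑ i, p i * y i - ∑ i, p i * x i| ≤ (∑ i, p i) * dist y x := by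
  rw [← Finset.sum_sub_distrib]
  have h1 : ∀ i ∈ Finset.univ, p i * y i - p i * x i = p i * (y i - x i) := fun i _ => by ring
  rw [Finset.sum_congr rfl h1]
  refine (Finset.abs_sum_le_sum_abs _ _).trans ?_
  rw [Finset.sum_mul]
  refine Finset.sum_le_sum fun i _ => ?_
  rw [abs_mul, abs_of_nonneg (hp i)]
  refine mul_le_mul_of_nonneg_left ?_ (hp i)
  rw [← Real.dist_eq]
  exact dist_le_pi_dist y x i

end AuxProofs

/-- Reduction for Theorem 2: if every subset of an `n`-point set `P ⊆ ℝ^d` with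
positive coordinates is cut out by a union of `k` half-spaces of the special
form `{x : ∑ᵢ xᵢ/bᵢ ≤ d}`, then there are `n` hyperplanes shattered by the set
system of open `k`-dimensional simplices, so that system has VC-dimension ≥ n. -/
theorem simplices_shatter_hyperplanes (d k n : ℕ) (hd : 2 ≤ d) (hk : 1 ≤ k) (hkd : k ≤ d)
    (P : Finset (Fin d → ℝ)) (hP : P.card = n) (hpos : ∀ p ∈ P, ∀ i, 0 < p i)
    (hcut : ∀ P' ⊆ P, ∃ b : Fin k → (Fin d → ℝ), (∀ j i, 0 < b j i) ∧
      ∀ p ∈ P, (p ∈ P' ↔ ∃ j, ∑ i, p i / b j i ≤ (d : ℝ))) :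
    ∃ H : Finset (Set (Fin d → ℝ)), H.card = n ∧ (∀ h ∈ H, IsHyperplane d h) ∧
      Shatters (SimplexSystem d k ↑H) ↑H ∧
      (n : ℕ∞) ≤ VCdim (SimplexSystem d k ↑H) := by
  classical
  haveI : Nonempty (Fin d) := ⟨⟨0, by omega⟩⟩
  have hd0 : (0:ℝ) < d := by exact_mod_cast (by omega : 0 < d)
  set hyp : (Fin d → ℝ) → Set (Fin d → ℝ) :=
    fun p => {x | ∑ i, p i * x i = (d:ℝ)} with hhyp
  set H : Finset (Set (Fin d → ℝ)) := P.image hyp with hH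
  have hinj : Set.InjOn hyp P := fun p hpmem q hqmem h =>
    hyperplane_inj (by omega) p q (hpos p hpmem) (hpos q hqmem) h
  have hcard : H.card = n := by rw [hH, Finset.card_image_of_injOn hinj, hP]
  have hhyper : ∀ h ∈ H, IsHyperplane d h := by
    intro h hh
    obtain ⟨p, hpP, rfl⟩ := Finset.mem_image.mp hh
    refine ⟨p, d, ?_, rfl⟩
    intro hp0
    have h1 := hpos p hpP ⟨0, by omega⟩
    rw [hp0] at h1
    simp at h1
  have hshatters : Shatters (SimplexSystem d k ↑H) ↑H := by
    intro Z hZ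
    set P' : Finset (Fin d → ℝ) := P.filter (fun p => hyp p ∈ Z) with hP'def
    obtain ⟨b, hbpos, hbiff⟩ := hcut P' (Finset.filter_subset _ _)
    set F : (Fin d → ℝ) → (Fin d → ℝ) → ℝ := fun p x => ∑ i, p i * x i with hF
    set q : Fin k → (Fin d → ℝ) := fun j i => (b j i)⁻¹ with hqdef
    have hqpos : ∀ j i, 0 < q j i := fun j i => inv_pos.mpr (hbpos j i)
    have hdiv : ∀ p (j : Fin k), (∑ i, p i / b j i) = F p (q j) := by
      intro p j
      exact Finset.sum_congr rfl fun i _ => by rw [div_eq_mul_inv]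
    have hFpos : ∀ p ∈ P, ∀ (x : Fin d → ℝ), (∀ i, 0 < x i) → 0 < F p x := by
      intro p hpP x hx
      exact Finset.sum_pos (fun i _ => mul_pos (hpos p hpP i) (hx i)) Finset.univ_nonempty
    -- choose ε
    obtain ⟨ε, hε0, hε1, hεbig⟩ : ∃ ε : ℝ, 0 < ε ∧ ε < 1 ∧
        ∀ p ∈ P, ∀ j : Fin k, (d:ℝ) < F p (q j) → (d:ℝ) < (1-ε) * F p (q j) := by
      set g : (Fin d → ℝ) × Fin k → ℝ := fun pj =>
        if (d:ℝ) < F pj.1 (q pj.2) then (F pj.1 (q pj.2) - d) / F pj.1 (q pj.2) else 1 with hg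
      set s : Finset ℝ := insert 1 ((P ×ˢ (Finset.univ : Finset (Fin k))).image g) with hs
      have hsne : s.Nonempty := ⟨1, Finset.mem_insert_self _ _⟩
      have hmpos : 0 < s.min' hsne := by
        rw [Finset.lt_min'_iff]
        intro y hy
        rw [hs, Finset.mem_insert] at hy
        rcases hy with rfl | hy
        · norm_num
        · obtain ⟨pj, hpj, rfl⟩ := Finset.mem_image.mp hy
          rw [hg]
          by_cases hc : (d:ℝ) < F pj.1 (q pj.2)
          · simp only [hc, if_true]
            apply div_pos (by linarith) (by linarith)
          · simp only [hc, if_false]; norm_num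
      have hm1 : s.min' hsne ≤ 1 := Finset.min'_le _ _ (Finset.mem_insert_self _ _)
      refine ⟨s.min' hsne / 2, by linarith, by linarith, ?_⟩
      intro p hpP j hdF
      have hF0 : 0 < F p (q j) := lt_trans hd0 hdF
      have hmem : g (p, j) ∈ s := by
        rw [hs]
        exact Finset.mem_insert_of_mem (Finset.mem_image_of_mem g
          (Finset.mem_product.mpr ⟨hpP, Finset.mem_univ j⟩))
      have hgval : g (p, j) = (F p (q j) - d) / F p (q j) := by rw [hg]; simp only [hdF, if_true]
      have hle : s.min' hsne ≤ (F p (q j) - d) / F p (q j) := hgval ▸ Finset.min'_le _ _ hmem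
      have hlt : s.min' hsne / 2 < (F p (q j) - d) / F p (q j) := by linarith
      rw [div_lt_div_iff₀ (by norm_num) hF0] at hlt
      nlinarith
    -- choose M
    obtain ⟨M, hM⟩ : ∃ M : ℝ, ∀ p ∈ P, (d:ℝ) < F p (fun _ => M) := by
      set s : Finset ℝ := insert 1 (P.image (fun p => ((d:ℝ)+1) / ∑ i, p i)) with hs
      have hsne : s.Nonempty := ⟨1, Finset.mem_insert_self _ _⟩
      refine ⟨s.max' hsne, ?_⟩
      intro p hpP
      have hsum : 0 < ∑ i, p i :=
        Finset.sum_pos (fun i _ => hpos p hpP i) Finset.univ_nonempty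
      have hmem : ((d:ℝ)+1) / ∑ i, p i ∈ s := by
        rw [hs]
        exact Finset.mem_insert_of_mem (Finset.mem_image_of_mem _ hpP)
      have hle : ((d:ℝ)+1) / ∑ i, p i ≤ s.max' hsne := Finset.le_max' _ _ hmem
      have hFM : F p (fun _ => s.max' hsne) = (∑ i, p i) * s.max' hsne := by
        rw [hF]
        exact (Finset.sum_mul _ _ _).symm
      rw [hFM]
      rw [div_le_iff₀ hsum] at hle
      linarith
    -- the vertex prototype
    set z : Fin (k+1) → (Fin d → ℝ) :=
      Fin.cons (fun _ => M) (fun j => (1-ε) • q j) with hzdef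
    have hz0 : z 0 = fun _ => M := rfl
    have hzsucc : ∀ j : Fin k, z j.succ = (1-ε) • q j := fun j => rfl
    have hFzsucc : ∀ p (j : Fin k), F p (z j.succ) = (1-ε) * F p (q j) := by
      intro p j
      rw [hzsucc j, hF]
      simp only
      rw [Finset.mul_sum]
      exact Finset.sum_congr rfl fun i _ => by simp [smul_eq_mul]; ring
    -- values at z satisfy strict conditions
    have hz_top : ∀ p ∈ P, (d:ℝ) < F p (z 0) := fun p hpP => hM p hpP
    have hz_in : ∀ p ∈ P', ∃ j : Fin k, F p (z j.succ) < d := by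
      intro p hpP'
      have hpP : p ∈ P := Finset.filter_subset _ _ hpP'
      obtain ⟨j, hj⟩ := (hbiff p hpP).mp hpP'
      rw [hdiv p j] at hj
      have hq0 : 0 < F p (q j) := hFpos p hpP (q j) (hqpos j)
      refine ⟨j, ?_⟩
      rw [hFzsucc]
      nlinarith
    have hz_out : ∀ p ∈ P, p ∉ P' → ∀ j : Fin (k+1), (d:ℝ) < F p (z j) := by
      intro p hpP hpP' j
      refine Fin.cases ?_ ?_ j
      · exact hz_top p hpP
      · intro j'
        rw [hFzsucc]
        apply hεbig p hpP
        by_contra hle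
        push_neg at hle
        exact hpP' ((hbiff p hpP).mpr ⟨j', by rw [hdiv p j']; exact hle⟩)
    -- choose δ
    set g : (Fin d → ℝ) × Fin (k+1) → ℝ := fun pj =>
      if F pj.1 (z pj.2) ≠ (d:ℝ) then |F pj.1 (z pj.2) - d| / ((∑ i, pj.1 i) + 1) else 1
      with hgdef
    set s : Finset ℝ :=
      insert 1 ((P ×ˢ (Finset.univ : Finset (Fin (k+1)))).image g) with hsdef
    have hsne : s.Nonempty := ⟨1, Finset.mem_insert_self _ _⟩
    have hmpos : 0 < s.min' hsne := by
      rw [Finset.lt_min'_iff]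
      intro y hy
      rw [hsdef, Finset.mem_insert] at hy
      rcases hy with rfl | hy
      · norm_num
      · obtain ⟨pj, hpj, rfl⟩ := Finset.mem_image.mp hy
        have hpjP : pj.1 ∈ P := (Finset.mem_product.mp hpj).1
        have hsnn : (0:ℝ) ≤ ∑ i, pj.1 i :=
          Finset.sum_nonneg fun i _ => (hpos pj.1 hpjP i).le
        show (0:ℝ) < if F pj.1 (z pj.2) ≠ (d:ℝ) then
          |F pj.1 (z pj.2) - (d:ℝ)| / ((∑ i, pj.1 i) + 1) else 1
        by_cases hc : F pj.1 (z pj.2) ≠ (d:ℝ)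
        · rw [if_pos hc]
          exact div_pos (abs_pos.mpr (sub_ne_zero.mpr hc)) (by linarith)
        · rw [if_neg hc]; norm_num
    set δ : ℝ := s.min' hsne / 2 with hδdef
    have hδ0 : 0 < δ := by rw [hδdef]; linarith
    -- preservation of strict inequalities
    have hpres : ∀ p ∈ P, ∀ (j : Fin (k+1)) (x : Fin d → ℝ), dist x (z j) < δ →
        ((d:ℝ) < F p (z j) → (d:ℝ) < F p x) ∧ (F p (z j) < d → F p x < d) := by
      intro p hpP j x hdist
      have hsnn : (0:ℝ) ≤ ∑ i, p i := Finset.sum_nonneg fun i _ => (hpos p hpP i).le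
      have hkey : F p (z j) ≠ (d:ℝ) → |F p x - F p (z j)| < |F p (z j) - d| := by
        intro hne
        have hmem : g (p, j) ∈ s := by
          rw [hsdef]
          exact Finset.mem_insert_of_mem (Finset.mem_image_of_mem g
            (Finset.mem_product.mpr ⟨hpP, Finset.mem_univ j⟩))
        have hgval : g (p, j) = |F p (z j) - d| / ((∑ i, p i) + 1) := if_pos hne
        have hle : s.min' hsne ≤ |F p (z j) - d| / ((∑ i, p i) + 1) :=
          hgval ▸ Finset.min'_le _ _ hmem
        have hδlt : δ < |F p (z j) - d| / ((∑ i, p i) + 1) := by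
          rw [hδdef]; linarith
        have h1 : |F p x - F p (z j)| ≤ (∑ i, p i) * dist x (z j) := by
          rw [hF]
          exact F_perturb p (z j) x (fun i => (hpos p hpP i).le)
        have h2 : (∑ i, p i) * dist x (z j) ≤ ((∑ i, p i) + 1) * dist x (z j) := by
          apply mul_le_mul_of_nonneg_right _ dist_nonneg
          linarith
        have h3 : ((∑ i, p i) + 1) * dist x (z j) < ((∑ i, p i) + 1) * δ := by
          apply mul_lt_mul_of_pos_left hdist (by linarith)
        have h4 : ((∑ i, p i) + 1) * δ < |F p (z j) - d| := by
          rw [hδdef]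
          rw [lt_div_iff₀ (by linarith : (0:ℝ) < (∑ i, p i) + 1)] at hδlt
          nlinarith
        linarith
      constructor
      · intro hgt
        have := hkey (ne_of_gt hgt)
        rw [abs_of_pos (by linarith : (0:ℝ) < F p (z j) - d)] at this
        have := abs_lt.mp this
        linarith [this.1]
      · intro hlt
        have := hkey (ne_of_lt hlt)
        rw [abs_of_neg (by linarith : F p (z j) - d < 0)] at this
        have := abs_lt.mp this
        linarith [this.2]
    -- get the affinely independent perturbation
    obtain ⟨v, hvind, hvdist⟩ := exists_affineIndependent_near d k hkd z δ hδ0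
    -- strict conditions at v
    have hv_top : ∀ p ∈ P, (d:ℝ) < F p (v 0) := fun p hpP =>
      (hpres p hpP 0 (v 0) (hvdist 0)).1 (hz_top p hpP)
    have hv_in : ∀ p ∈ P', ∃ j : Fin k, F p (v j.succ) < d := by
      intro p hpP'
      obtain ⟨j, hj⟩ := hz_in p hpP'
      exact ⟨j, (hpres p (Finset.filter_subset _ _ hpP') j.succ (v j.succ)
        (hvdist j.succ)).2 hj⟩
    have hv_out : ∀ p ∈ P, p ∉ P' → ∀ j : Fin (k+1), (d:ℝ) < F p (v j) := fun p hpP hpP' j =>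
      (hpres p hpP j (v j) (hvdist j)).1 (hz_out p hpP hpP' j)
    -- the simplex
    set Δ : Set (Fin d → ℝ) := intrinsicInterior ℝ (convexHull ℝ (Set.range v)) with hΔdef
    have hpos_inter : ∀ p ∈ P', (hyp p ∩ Δ).Nonempty := by
      intro p hpP'
      have hpP : p ∈ P := Finset.filter_subset _ _ hpP'
      obtain ⟨j, hj⟩ := hv_in p hpP'
      obtain ⟨t, ht, htsum, htval⟩ := exists_weights (fun j' => F p (v j')) (d:ℝ) j.succ 0
        hj (hv_top p hpP)
      refine ⟨∑ j', t j' • v j', ?_, ?_⟩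
      · show (∑ i, p i * (∑ j', t j' • v j') i) = (d:ℝ)
        rw [sum_mul_sum_smul, ← htval]
      · exact mem_intrinsicInterior_convexHull v hvind t ht htsum
    have hneg_inter : ∀ p ∈ P, p ∉ P' → ¬(hyp p ∩ Δ).Nonempty := by
      intro p hpP hpP' ⟨x, hx1, hx2⟩
      have hsub : convexHull ℝ (Set.range v) ⊆ {y | (d:ℝ) < F p y} := by
        apply convexHull_min
        · rintro _ ⟨j, rfl⟩
          exact hv_out p hpP hpP' j
        · apply convex_halfSpace_gt
          constructor
          · intro y1 y2
            rw [hF]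
            simp only
            rw [← Finset.sum_add_distrib]
            exact Finset.sum_congr rfl fun i _ => by simp [Pi.add_apply]; ring
          · intro c y1
            show ∑ i, p i * (c • y1) i = c • ∑ i, p i * y1 i
            rw [smul_eq_mul, Finset.mul_sum]
            exact Finset.sum_congr rfl fun i _ => by simp [smul_eq_mul]; ring
      have hx3 : (d:ℝ) < F p x := hsub (intrinsicInterior_subset hx2)
      have hx4 : F p x = d := hx1
      linarith
    -- final set
    refine ⟨{h ∈ (↑H : Set (Set (Fin d → ℝ))) | (h ∩ Δ).Nonempty},
      ⟨Δ, ⟨v, hvind, rfl⟩, rfl⟩, ?_⟩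
    ext h
    simp only [Set.mem_inter_iff, Set.mem_setOf_eq]
    constructor
    · rintro ⟨hhH, -, hne⟩
      obtain ⟨p, hpP, rfl⟩ := Finset.mem_image.mp (Finset.mem_coe.mp hhH)
      by_contra hz
      have hpP' : p ∉ P' := by
        rw [hP'def, Finset.mem_filter]
        rintro ⟨-, hmem⟩
        exact hz hmem
      exact hneg_inter p hpP hpP' hne
    · intro hhZ
      have hhH : h ∈ (↑H : Set (Set (Fin d → ℝ))) := hZ hhZ
      obtain ⟨p, hpP, rfl⟩ := Finset.mem_image.mp (Finset.mem_coe.mp hhH)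
      have hpP' : p ∈ P' := by
        rw [hP'def, Finset.mem_filter]
        exact ⟨hpP, hhZ⟩
      exact ⟨hhH, hhH, hpos_inter p hpP'⟩

  refine ⟨H, hcard, hhyper, hshatters, ?_⟩
  rw [← hcard, VCdim]
  exact le_iSup₂_of_le H hshatters le_rfl
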